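/- arXiv:0806.3033 — 9 statements merged into one kernel-verified Lean document; each statement's English description precedes it below -/
import Mathlib

section
/- Suppose F : ℕ → ℕ ∪ {*} satisfies F(0)=F(1)=F(2)=F(3)=* and for n ≥ 4, F(n) = mex({F(n-2), F(n-3)} ∪ {F(i) ⊕ F(j) : j ≥ i ≥ 1, i + j = n-3}), where x ⊕ * = * ⊕ x = * and ⊕ is Nim-sum on naturals, and mex ignores * values. If for some p > 0 and q > 0 we have F(n+p) = F(n) for all n with q ≤ n ≤ 2q + p + 2, then F(n+p) = F(n) for all n ≥ q. -/
/-- Minimum excluded value of a set of naturals. -/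
noncomputable def mex (S : Set ℕ) : ℕ := sInf {m | m ∉ S}

/-- Nim-sum extended to `Option ℕ`, where `none` plays the role of the
undefined value `*`: `x ⊕ * = * ⊕ x = *`. -/
def oxor : Option ℕ → Option ℕ → Option ℕ
  | some a, some b => some (a ^^^ b)
  | _, _ => none

/-- The values (possibly undefined) of the options of the path `P n` (`n ≥ 4`) for the
function `F`: the values of `P (n-2)`, `P (n-3)` and of the unions `P i ∪ P j`. -/
def optionValues (F : ℕ → Option ℕ) (n : ℕ) : Set (Option ℕ) :=
  {F (n - 2), F (n - 3)} ∪
    {v | ∃ i j : ℕ, 1 ≤ i ∧ i ≤ j ∧ i + j = n - 3 ∧ v = oxor (F i) (F j)}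

/-- `mex` of a set of possibly-undefined values, ignoring the undefined ones. -/
noncomputable def mexO (S : Set (Option ℕ)) : ℕ := mex {m | some m ∈ S}

lemma oxor_comm (a b : Option ℕ) : oxor a b = oxor b a := by
  cases a <;> cases b <;> simp [oxor, Nat.xor_comm]

theorem foreclosed_grundy_periodicity (F : ℕ → Option ℕ)
    (h0 : F 0 = none) (h1 : F 1 = none) (h2 : F 2 = none) (h3 : F 3 = none)
    (hrec : ∀ n, 4 ≤ n → F n = some (mexO (optionValues F n)))
    (p q : ℕ) (hp : 0 < p) (hq : 0 < q)
    (hper : ∀ n, q ≤ n → n ≤ 2 * q + p + 2 → F (n + p) = F n) :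
    ∀ n, q ≤ n → F (n + p) = F n := by
  intro n
  induction n using Nat.strong_induction_on with
  | _ n IH =>
  intro hn
  by_cases hle : n ≤ 2 * q + p + 2
  · exact hper n hn hle
  · push_neg at hle
    have hn4 : 4 ≤ n := by omega
    have hnp4 : 4 ≤ n + p := by omega
    rw [hrec n hn4, hrec (n + p) hnp4]
    have hset : optionValues F (n + p) = optionValues F n := by
      unfold optionValues
      have e2 : F (n + p - 2) = F (n - 2) := by
        have h := IH (n - 2) (by omega) (by omega)
        have : n + p - 2 = (n - 2) + p := by omega
        rw [this, h]
      have e3 : F (n + p - 3) = F (n - 3) := by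
        have h := IH (n - 3) (by omega) (by omega)
        have : n + p - 3 = (n - 3) + p := by omega
        rw [this, h]
      rw [e2, e3]
      congr 1
      ext v
      simp only [Set.mem_setOf_eq]
      constructor
      · rintro ⟨i, j, hi, hij, hsum, hv⟩
        have hjq : q + p ≤ j := by omega
        have hFj : F j = F (j - p) := by
          have h := IH (j - p) (by omega) (by omega)
          have : j - p + p = j := by omega
          rw [this] at h
          exact h
        by_cases hc : i ≤ j - p
        · exact ⟨i, j - p, hi, hc, by omega, by rw [hv, hFj]⟩
        · refine ⟨j - p, i, by omega, by omega, by omega, ?_⟩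
          rw [hv, hFj, oxor_comm]
      · rintro ⟨i, j, hi, hij, hsum, hv⟩
        have hjq : q ≤ j := by omega
        have hFj : F (j + p) = F j := IH j (by omega) hjq
        exact ⟨i, j + p, hi, by omega, by omega, by rw [hv, hFj]⟩
    rw [hset]
end

section
/- Let R : ℕ → ℕ be defined by R(0) = 0 and, for n ≥ 1, R(n) = 1 + min{even values among remotenesses of options of P_n} if some option has even remoteness, and R(n) = 1 + max{odd values among remotenesses of options of P_n} otherwise, where the remoteness of a disjoint union of paths is computed with the same rules from its own options (a move in a union plays in every component simultaneously and the game ends when any component ends). Then R(1)=R(2)=R(3)=1, R(4)=R(5)=2, R(6)=R(7)=R(8)=3, R(9)=R(10)=4, and R(n)=3 for all n ≥ 11. -/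
/-- The options of a single path `P n` in Node-Kayles, each given as a multiset of
resulting path lengths.  A resulting empty path is recorded as `0`, which marks an
ended component.  `P 1` and `P 2` only move to the (ended) empty path. -/
def pathOptions (n : ℕ) : Set (Multiset ℕ) :=
  if n = 0 then ∅
  else if n ≤ 2 then {({0} : Multiset ℕ)}
  else {({n - 2} : Multiset ℕ), ({n - 3} : Multiset ℕ)} ∪
    {m | ∃ i j : ℕ, 1 ≤ i ∧ i ≤ j ∧ i + j = n - 3 ∧ m = ({i, j} : Multiset ℕ)}

/-- A conjunctive move: play one Node-Kayles move simultaneously in every component. -/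
inductive ConjMove : Multiset ℕ → Multiset ℕ → Prop
  | single {n : ℕ} {h : Multiset ℕ} : h ∈ pathOptions n → ConjMove {n} h
  | cons {n : ℕ} {h G H : Multiset ℕ} :
      h ∈ pathOptions n → ConjMove G H → ConjMove (n ::ₘ G) (h + H)

/-- A position is ended (for the short ending rule) when it is empty or
some component has ended. -/
def Ended (G : Multiset ℕ) : Prop := G = 0 ∨ 0 ∈ G


def r (n : ℕ) : ℕ :=
  if n = 0 then 0 else if n ≤ 3 then 1 else if n ≤ 5 then 2
  else if n ≤ 8 then 3 else if n ≤ 10 then 4 else 3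

lemma r_le (n : ℕ) : r n ≤ 4 := by unfold r; split_ifs <;> omega
lemma r_pos {n : ℕ} (h : 1 ≤ n) : 1 ≤ r n := by unfold r; split_ifs <;> omega
lemma r_ge2 {n : ℕ} (h : 4 ≤ n) : 2 ≤ r n := by unfold r; split_ifs <;> omega

def fv (G : Multiset ℕ) : ℕ := if G = 0 then 0 else (G.map r).fold min 4

lemma fv_single (k : ℕ) : fv {k} = r k := by
  simp [fv, Multiset.fold_singleton, min_eq_left (r_le k)]

lemma fv_pair (i j : ℕ) : fv {i, j} = min (r i) (r j) := by
  simp [fv, Multiset.fold_cons_left, Multiset.fold_singleton, min_eq_left (r_le j),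
    Multiset.insert_eq_cons]

lemma fv_cons {G : Multiset ℕ} (hG : G ≠ 0) (a : ℕ) : fv (a ::ₘ G) = min (r a) (fv G) := by
  simp [fv, hG, Multiset.fold_cons_left]

lemma fv_add {G H : Multiset ℕ} (hG : G ≠ 0) (hH : H ≠ 0) : fv (G + H) = min (fv G) (fv H) := by
  induction G using Multiset.induction with
  | empty => exact absurd rfl hG
  | cons a G ih =>
    rcases eq_or_ne G 0 with rfl | hG0
    · rw [Multiset.cons_add, zero_add, fv_cons hH a, Multiset.cons_zero, fv_single]
    · rw [Multiset.cons_add, fv_cons (add_ne_zero'.mpr (Or.inl hG0)) a, ih hG0,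
        fv_cons hG0, min_assoc]

lemma fv_pos {G : Multiset ℕ} (hG : G ≠ 0) (h0 : 0 ∉ G) : 1 ≤ fv G := by
  induction G using Multiset.induction with
  | empty => exact absurd rfl hG
  | cons a G ih =>
    have ha : a ≠ 0 := fun h => h0 (h ▸ Multiset.mem_cons_self a G)
    rcases eq_or_ne G 0 with rfl | hG0
    · rw [Multiset.cons_zero, fv_single]; exact r_pos (by omega)
    · rw [fv_cons hG0]
      exact le_min (r_pos (by omega)) (ih hG0 (fun h => h0 (Multiset.mem_cons_of_mem h)))
lemma mem_pathOptions_small {n : ℕ} {h : Multiset ℕ} (h1 : 1 ≤ n) (h2 : n ≤ 2)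
    (hh : h ∈ pathOptions n) : h = {0} := by
  simp [pathOptions, (by omega : ¬ n = 0), h2] at hh
  exact hh.2

lemma mem_pathOptions_big {n : ℕ} {h : Multiset ℕ} (h3 : 3 ≤ n) :
    h ∈ pathOptions n ↔ h = {n - 2} ∨ h = {n - 3} ∨
      ∃ i j : ℕ, 1 ≤ i ∧ i ≤ j ∧ i + j = n - 3 ∧ h = {i, j} := by
  unfold pathOptions
  rw [if_neg (by omega), if_neg (by omega)]
  simp only [Set.mem_union, Set.mem_insert_iff, Set.mem_singleton_iff, Set.mem_setOf_eq]
  constructor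
  · rintro ((h1 | h1) | ⟨i, j, hi, hij, hs, rfl⟩)
    · exact Or.inl h1
    · exact Or.inr (Or.inl h1)
    · exact Or.inr (Or.inr ⟨i, j, hi, hij, hs, rfl⟩)
  · rintro (h1 | h1 | ⟨i, j, hi, hij, hs, rfl⟩)
    · exact Or.inl (Or.inl h1)
    · exact Or.inl (Or.inr h1)
    · exact Or.inr ⟨i, j, hi, hij, hs, rfl⟩

lemma r0 : r 0 = 0 := rfl

lemma pair_min {i j : ℕ} (h1 : 1 ≤ i) (h3 : i ≤ 3) (hj : 1 ≤ j) : min (r i) (r j) = 1 := by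
  have hi : r i = 1 := by unfold r; split_ifs <;> omega
  have := r_pos hj
  omega

lemma opt_fv_pos {n : ℕ} {h : Multiset ℕ} (hn : 4 ≤ n) (hh : h ∈ pathOptions n) :
    1 ≤ fv h := by
  rcases (mem_pathOptions_big (by omega)).mp hh with rfl | rfl | ⟨i, j, hi, hij, hs, rfl⟩
  · rw [fv_single]; exact r_pos (by omega)
  · rw [fv_single]; exact r_pos (by omega)
  · rw [fv_pair]; exact le_min (r_pos (by omega)) (r_pos (by omega))

lemma Sb {n : ℕ} {h : Multiset ℕ} (hh : h ∈ pathOptions n) (hre : r n % 2 = 0)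
    (hn : 1 ≤ n) : fv h % 2 = 1 ∧ fv h ≤ r n - 1 := by
  have hn10 : n = 4 ∨ n = 5 ∨ n = 9 ∨ n = 10 := by
    unfold r at hre; split_ifs at hre <;> omega
  have hmem := (mem_pathOptions_big (by omega : 3 ≤ n)).mp hh
  rcases hmem with rfl | rfl | ⟨i, j, hi, hij, hs, rfl⟩
  · rw [fv_single]; rcases hn10 with rfl | rfl | rfl | rfl <;> decide
  · rw [fv_single]; rcases hn10 with rfl | rfl | rfl | rfl <;> decide
  · rw [fv_pair, pair_min hi (by omega) (by omega)]
    rcases hn10 with rfl | rfl | rfl | rfl <;> decide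

lemma Sa {n : ℕ} {h : Multiset ℕ} (hh : h ∈ pathOptions n) (hn : 1 ≤ n)
    (he : fv h % 2 = 0) : r n % 2 = 1 ∧ r n ≤ fv h + 1 := by
  rcases Nat.lt_or_ge n 3 with h3 | h3
  · have : r n = 1 := by unfold r; split_ifs <;> omega
    omega
  rcases Nat.even_or_odd (r n) with hre | hro
  · rw [Nat.even_iff] at hre
    have := (Sb hh hre (by omega)).1
    omega
  · rw [Nat.odd_iff] at hro
    refine ⟨hro, ?_⟩
    rcases Nat.lt_or_ge n 4 with h4 | h4
    · have : r n = 1 := by unfold r; split_ifs <;> omega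
      omega
    · have h1 := opt_fv_pos h4 hh
      have hr3 : r n = 3 := by
        unfold r at hro ⊢; split_ifs at hro ⊢ <;> omega
      omega

lemma S1 {n : ℕ} (hn : 1 ≤ n) : ∃ h ∈ pathOptions n, fv h = r n - 1 := by
  rcases Nat.lt_or_ge n 3 with h3 | h3
  · refine ⟨{0}, ?_, ?_⟩
    · unfold pathOptions
      rw [if_neg (by omega), if_pos (by omega)]
      rfl
    · rw [fv_single]
      have : r n = 1 := by unfold r; split_ifs <;> omega
      simp [r0, this]
  rcases Nat.lt_or_ge n 11 with h11 | h11
  · interval_cases n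
    · exact ⟨{0}, (mem_pathOptions_big (by omega)).mpr (Or.inr (Or.inl rfl)), by decide⟩
    · exact ⟨{2}, (mem_pathOptions_big (by omega)).mpr (Or.inl rfl), by decide⟩
    · exact ⟨{3}, (mem_pathOptions_big (by omega)).mpr (Or.inl rfl), by decide⟩
    · exact ⟨{4}, (mem_pathOptions_big (by omega)).mpr (Or.inl rfl), by decide⟩
    · exact ⟨{5}, (mem_pathOptions_big (by omega)).mpr (Or.inl rfl), by decide⟩
    · exact ⟨{5}, (mem_pathOptions_big (by omega)).mpr (Or.inr (Or.inl rfl)), by decide⟩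
    · exact ⟨{7}, (mem_pathOptions_big (by omega)).mpr (Or.inl rfl), by decide⟩
    · exact ⟨{8}, (mem_pathOptions_big (by omega)).mpr (Or.inl rfl), by decide⟩
  · refine ⟨{4, n - 7}, (mem_pathOptions_big (by omega)).mpr
      (Or.inr (Or.inr ⟨4, n - 7, by omega, by omega, by omega, rfl⟩)), ?_⟩
    rw [fv_pair]
    have h2 : r 4 = 2 := by decide
    have := r_ge2 (by omega : 4 ≤ n - 7)
    have hrn : r n = 3 := by unfold r; split_ifs <;> omega
    omega

lemma opt_ne_zero {n : ℕ} {h : Multiset ℕ} (hh : h ∈ pathOptions n) : h ≠ 0 := by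
  rcases Nat.lt_or_ge n 3 with h3 | h3
  · rcases Nat.eq_zero_or_pos n with rfl | hn
    · simp [pathOptions] at hh
    · rw [mem_pathOptions_small hn (by omega) hh]; exact Multiset.cons_ne_zero
  · rcases (mem_pathOptions_big h3).mp hh with rfl | rfl | ⟨i, j, hi, hij, hs, rfl⟩ <;>
      exact Multiset.cons_ne_zero

lemma opt_sum_lt {n : ℕ} {h : Multiset ℕ} (hn : 1 ≤ n) (hh : h ∈ pathOptions n) :
    h.sum < n := by
  rcases Nat.lt_or_ge n 3 with h3 | h3
  · rw [mem_pathOptions_small hn (by omega) hh]; simp; omega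
  · rcases (mem_pathOptions_big h3).mp hh with rfl | rfl | ⟨i, j, hi, hij, hs, rfl⟩ <;>
      simp [Multiset.sum_singleton, Multiset.insert_eq_cons] <;> omega

lemma conj_src_ne {G H : Multiset ℕ} (m : ConjMove G H) : G ≠ 0 := by
  cases m <;> exact Multiset.cons_ne_zero

lemma conj_tgt_ne {G H : Multiset ℕ} (m : ConjMove G H) : H ≠ 0 := by
  cases m with
  | single hh => exact opt_ne_zero hh
  | cons hh m => exact add_ne_zero'.mpr (Or.inl (opt_ne_zero hh))

lemma conj_sum_lt {G H : Multiset ℕ} (m : ConjMove G H) (h0 : 0 ∉ G) : H.sum < G.sum := by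
  induction m with
  | @single n h hh =>
    have hn : 1 ≤ n := by
      rcases Nat.eq_zero_or_pos n with rfl | hn
      · exact absurd (Multiset.mem_singleton_self 0) h0
      · exact hn
    simpa using opt_sum_lt hn hh
  | @cons n h G H hh m ih =>
    have hn : 1 ≤ n := by
      rcases Nat.eq_zero_or_pos n with rfl | hn
      · exact absurd (Multiset.mem_cons_self 0 G) h0
      · exact hn
    have h0G : 0 ∉ G := fun hm => h0 (Multiset.mem_cons_of_mem hm)
    have h1 := opt_sum_lt hn hh
    have h2 := ih h0G
    simp only [Multiset.sum_cons, Multiset.sum_add] at *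
    omega

lemma conj_key {G H : Multiset ℕ} (m : ConjMove G H) (h0 : 0 ∉ G) :
    (fv H % 2 = 0 → fv G % 2 = 1 ∧ fv G ≤ fv H + 1) ∧
    (fv G % 2 = 0 → fv H % 2 = 1 ∧ fv H ≤ fv G - 1) := by
  induction m with
  | @single n h hh =>
    have hn : 1 ≤ n := by
      rcases Nat.eq_zero_or_pos n with rfl | hn
      · exact absurd (Multiset.mem_singleton_self 0) h0
      · exact hn
    rw [fv_single]
    exact ⟨fun he => Sa hh hn he, fun hre => Sb hh hre hn⟩
  | @cons n h G H hh m ih =>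
    have hn : 1 ≤ n := by
      rcases Nat.eq_zero_or_pos n with rfl | hn
      · exact absurd (Multiset.mem_cons_self 0 G) h0
      · exact hn
    have h0G : 0 ∉ G := fun hm => h0 (Multiset.mem_cons_of_mem hm)
    obtain ⟨ia, ib⟩ := ih h0G
    have sa : fv h % 2 = 0 → r n % 2 = 1 ∧ r n ≤ fv h + 1 := fun he => Sa hh hn he
    have sb : r n % 2 = 0 → fv h % 2 = 1 ∧ fv h ≤ r n - 1 := fun hre => Sb hh hre hn
    have hrn : 1 ≤ r n := r_pos hn
    have hfg : 1 ≤ fv G := fv_pos (conj_src_ne m) h0G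
    rw [fv_cons (conj_src_ne m), fv_add (opt_ne_zero hh) (conj_tgt_ne m)]
    omega

lemma conj_exists {G : Multiset ℕ} (hG : G ≠ 0) (h0 : 0 ∉ G) :
    ∃ H, ConjMove G H ∧ fv H = fv G - 1 := by
  induction G using Multiset.induction with
  | empty => exact absurd rfl hG
  | cons a G ih =>
    have ha : 1 ≤ a := by
      rcases Nat.eq_zero_or_pos a with rfl | hn
      · exact absurd (Multiset.mem_cons_self 0 G) h0
      · exact hn
    obtain ⟨h, hh, hfh⟩ := S1 ha
    rcases eq_or_ne G 0 with rfl | hG0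
    · exact ⟨h, by rw [Multiset.cons_zero]; exact ConjMove.single hh,
        by rw [Multiset.cons_zero, fv_single]; omega⟩
    · have h0G : 0 ∉ G := fun hm => h0 (Multiset.mem_cons_of_mem hm)
      obtain ⟨H, mH, hfH⟩ := ih hG0 h0G
      refine ⟨h + H, ConjMove.cons hh mH, ?_⟩
      rw [fv_add (opt_ne_zero hh) (conj_tgt_ne mH), fv_cons hG0]
      have := r_pos ha
      have := fv_pos hG0 h0G
      omega

lemma fv_ended {G : Multiset ℕ} (hE : Ended G) : fv G = 0 := by
  rcases hE with rfl | hm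
  · simp [fv]
  · obtain ⟨G', rfl⟩ := Multiset.exists_cons_of_mem hm
    rcases eq_or_ne G' 0 with rfl | h
    · rw [Multiset.cons_zero, fv_single]; rfl
    · rw [fv_cons h]; simp [r0]


theorem conjunctive_remoteness_normal (R : Multiset ℕ → ℕ)
    (hend : ∀ G, Ended G → R G = 0)
    (heven : ∀ G, ¬ Ended G → (∃ H, ConjMove G H ∧ Even (R H)) →
      R G = 1 + sInf {r | Even r ∧ ∃ H, ConjMove G H ∧ R H = r})
    (hodd : ∀ G, ¬ Ended G → ¬ (∃ H, ConjMove G H ∧ Even (R H)) →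
      R G = 1 + sSup {r | Odd r ∧ ∃ H, ConjMove G H ∧ R H = r}) :
    R {1} = 1 ∧ R {2} = 1 ∧ R {3} = 1 ∧ R {4} = 2 ∧ R {5} = 2 ∧
    R {6} = 3 ∧ R {7} = 3 ∧ R {8} = 3 ∧ R {9} = 4 ∧ R {10} = 4 ∧
    ∀ n, 11 ≤ n → R {n} = 3 := by

  have main : ∀ s G, Multiset.sum G ≤ s → R G = fv G := by
    intro s
    induction s with
    | zero =>
      intro G hG
      have hE : Ended G := by
        rcases eq_or_ne G 0 with rfl | hne
        · exact Or.inl rfl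
        · obtain ⟨a, ha⟩ := Multiset.exists_mem_of_ne_zero hne
          have := Multiset.single_le_sum (fun x _ => Nat.zero_le x) a ha
          right
          have : a = 0 := by omega
          exact this ▸ ha
      rw [hend G hE, fv_ended hE]
    | succ s ih =>
      intro G hG
      by_cases hE : Ended G
      · rw [hend G hE, fv_ended hE]
      · have hGne : G ≠ 0 := fun h => hE (Or.inl h)
        have h0 : 0 ∉ G := fun h => hE (Or.inr h)
        have hRmoves : ∀ H, ConjMove G H → R H = fv H := fun H m =>
          ih H (by have := conj_sum_lt m h0; omega)
        obtain ⟨H₀, m₀, hf₀⟩ := conj_exists hGne h0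
        have hfvpos : 1 ≤ fv G := fv_pos hGne h0
        rcases Nat.mod_two_eq_zero_or_one (fv G) with hp | hp
        · have hno : ¬ ∃ H, ConjMove G H ∧ Even (R H) := by
            rintro ⟨H, m, hEv⟩
            rw [hRmoves H m, Nat.even_iff] at hEv
            have := (conj_key m h0).1 hEv
            omega
          rw [hodd G hE hno]
          have hk₀ := (conj_key m₀ h0).2 hp
          have hGr : IsGreatest {x | Odd x ∧ ∃ H, ConjMove G H ∧ R H = x} (fv G - 1) := by
            constructor
            · refine ⟨by rw [Nat.odd_iff]; omega, H₀, m₀, by rw [hRmoves H₀ m₀, hf₀]⟩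
            · rintro x ⟨hox, H, m, hx⟩
              rw [hRmoves H m] at hx
              have := ((conj_key m h0).2 hp).2
              omega
          rw [hGr.csSup_eq]
          omega
        · have hEv₀ : Even (R H₀) := by rw [hRmoves H₀ m₀, hf₀, Nat.even_iff]; omega
          rw [heven G hE ⟨H₀, m₀, hEv₀⟩]
          have hLe : IsLeast {x | Even x ∧ ∃ H, ConjMove G H ∧ R H = x} (fv G - 1) := by
            constructor
            · exact ⟨by rw [Nat.even_iff]; omega, H₀, m₀, by rw [hRmoves H₀ m₀, hf₀]⟩
            · rintro x ⟨hevx, H, m, hx⟩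
              rw [hRmoves H m] at hx
              rw [Nat.even_iff] at hevx
              have := (conj_key m h0).1 (by omega : fv H % 2 = 0)
              omega
          rw [hLe.csInf_eq]
          omega
  have hsingle : ∀ n : ℕ, R {n} = r n := fun n => by
    rw [main (Multiset.sum {n}) {n} le_rfl, fv_single]
  refine ⟨?_, ?_, ?_, ?_, ?_, ?_, ?_, ?_, ?_, ?_, ?_⟩
  · rw [hsingle]; decide
  · rw [hsingle]; decide
  · rw [hsingle]; decide
  · rw [hsingle]; decide
  · rw [hsingle]; decide
  · rw [hsingle]; decide
  · rw [hsingle]; decide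
  · rw [hsingle]; decide
  · rw [hsingle]; decide
  · rw [hsingle]; decide
  · intro n hn
    rw [hsingle]
    unfold r
    split_ifs <;> omega
end

section
/- Let R⁻ be the misère remoteness for conjunctive compound Node-Kayles on paths: R⁻(empty) = 0 and R⁻(G) = 1 + min{odd remotenesses of options of G} if some option has odd remoteness, otherwise R⁻(G) = 1 + max{even remotenesses of options of G}; the remoteness of a disjoint union is computed recursively under conjunctive moves. Then R⁻(P_1) = R⁻(P_2) = 1 and R⁻(P_n) = 2 for every n ≥ 3. -/
lemma conjMove_ne_zero {G H : Multiset ℕ} (h : ConjMove G H) : G ≠ 0 := by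
  cases h <;> simp

lemma conjMove_sub {G H : Multiset ℕ} (hm : ConjMove G H) :
    ∀ n ∈ G, ∃ h, h ∈ pathOptions n ∧ h ≤ H := by
  induction hm with
  | single hx =>
    intro m hm
    rw [Multiset.mem_singleton] at hm
    subst hm
    exact ⟨_, hx, le_refl _⟩
  | cons hx _ ih =>
    intro m hm
    rcases Multiset.mem_cons.mp hm with rfl | hm'
    · exact ⟨_, hx, Multiset.le_add_right _ _⟩
    · obtain ⟨h, h1, h2⟩ := ih m hm'
      exact ⟨h, h1, le_trans h2 (Multiset.le_add_left _ _)⟩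

lemma conjMove_singleton {n : ℕ} {H : Multiset ℕ} (hm : ConjMove {n} H) :
    H ∈ pathOptions n := by
  generalize hG : ({n} : Multiset ℕ) = G at hm
  induction hm with
  | single hx =>
    rename_i n' h
    have : n' = n := by
      have := Multiset.singleton_inj.mp hG.symm
      omega
    subst this; exact hx
  | cons hx hmG ih =>
    exfalso
    rename_i n' h G' H'
    have hc : Multiset.card (n' ::ₘ G') = 1 := by rw [← hG]; simp
    simp at hc
    exact conjMove_ne_zero hmG hc

lemma mem_opt_small {k : ℕ} (h1 : 1 ≤ k) (h2 : k ≤ 2) :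
    ({0} : Multiset ℕ) ∈ pathOptions k := by
  simp only [pathOptions, if_neg (show ¬ k = 0 by omega), if_pos h2]
  rfl

lemma exists_opt {k : ℕ} (h1 : 1 ≤ k) : ∃ h, h ∈ pathOptions k := by
  by_cases h2 : k ≤ 2
  · exact ⟨_, mem_opt_small h1 h2⟩
  · refine ⟨{k - 2}, ?_⟩
    simp only [pathOptions, if_neg (by omega : ¬ k = 0), if_neg h2]
    left; left; rfl

theorem conjunctive_remoteness_misere (R : Multiset ℕ → ℕ)
    (hend : ∀ G, Ended G → R G = 0)
    (hodd : ∀ G, ¬ Ended G → (∃ H, ConjMove G H ∧ Odd (R H)) →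
      R G = 1 + sInf {r | Odd r ∧ ∃ H, ConjMove G H ∧ R H = r})
    (heven : ∀ G, ¬ Ended G → ¬ (∃ H, ConjMove G H ∧ Odd (R H)) →
      R G = 1 + sSup {r | Even r ∧ ∃ H, ConjMove G H ∧ R H = r}) :
    R {1} = 1 ∧ R {2} = 1 ∧ ∀ n, 3 ≤ n → R {n} = 2 := by
  -- key: if G is not ended, has a move, and all moves go to R = 0, then R G = 1
  have key : ∀ G : Multiset ℕ, ¬ Ended G → (∃ H, ConjMove G H) →
      (∀ H, ConjMove G H → R H = 0) → R G = 1 := by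
    intro G hne ⟨H0, hH0⟩ hall
    have hno : ¬ (∃ H, ConjMove G H ∧ Odd (R H)) := by
      rintro ⟨H, hm, hoddH⟩
      simp [hall H hm] at hoddH
    rw [heven G hne hno]
    have hset : {r | Even r ∧ ∃ H, ConjMove G H ∧ R H = r} = {0} := by
      ext r
      constructor
      · rintro ⟨_, H, hm, rfl⟩
        exact hall H hm
      · rintro rfl
        exact ⟨Even.zero, H0, hH0, hall _ hH0⟩
    rw [hset, csSup_singleton]
  -- R of singletons 1 and 2
  have hsmall : ∀ k : ℕ, 1 ≤ k → k ≤ 2 → R {k} = 1 := by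
    intro k h1 h2
    apply key
    · rintro (h | h) <;> simp_all
      omega
    · exact ⟨{0}, ConjMove.single (mem_opt_small h1 h2)⟩
    · intro H hm
      have := conjMove_singleton hm
      simp [pathOptions, if_neg (by omega : ¬ k = 0), if_pos h2] at this
      subst this
      exact hend _ (Or.inr (by simp))
  -- R of pairs {1, k}
  have hpair : ∀ k : ℕ, 1 ≤ k → R {1, k} = 1 := by
    intro k h1
    apply key
    · rintro (h | h)
      · simp at h
      · simp at h
        omega
    · obtain ⟨h, hh⟩ := exists_opt h1
      exact ⟨_, ConjMove.cons (mem_opt_small le_rfl (by norm_num))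
        (ConjMove.single hh)⟩
    · intro H hm
      obtain ⟨h, hh, hle⟩ := conjMove_sub hm 1 (by simp)
      simp [pathOptions] at hh
      subst hh
      have h0 : (0 : ℕ) ∈ H := Multiset.mem_of_le hle (by simp)
      exact hend _ (Or.inr h0)
  refine ⟨hsmall 1 le_rfl (by norm_num), hsmall 2 (by norm_num) le_rfl, ?_⟩
  intro n hn
  -- there is an option with R = 1
  have hopt : ∃ H, ConjMove {n} H ∧ R H = 1 := by
    by_cases h5 : n ≤ 4
    · refine ⟨{n - 2}, ConjMove.single ?_, hsmall (n - 2) (by omega) (by omega)⟩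
      simp only [pathOptions, if_neg (by omega : ¬ n = 0), if_neg (by omega : ¬ n ≤ 2)]
      left; left; rfl
    · refine ⟨{1, n - 4}, ConjMove.single ?_, hpair (n - 4) (by omega)⟩
      simp only [pathOptions, if_neg (by omega : ¬ n = 0), if_neg (by omega : ¬ n ≤ 2)]
      right
      exact ⟨1, n - 4, le_rfl, by omega, by omega, rfl⟩
  have hne : ¬ Ended {n} := by
    rintro (h | h) <;> simp_all
    omega
  obtain ⟨H1, hm1, hr1⟩ := hopt
  rw [hodd {n} hne ⟨H1, hm1, by rw [hr1]; exact odd_one⟩]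
  have hinf : sInf {r | Odd r ∧ ∃ H, ConjMove {n} H ∧ R H = r} = 1 := by
    apply le_antisymm
    · exact Nat.sInf_le ⟨odd_one, H1, hm1, hr1⟩
    · refine le_csInf ⟨1, odd_one, H1, hm1, hr1⟩ ?_
      rintro r ⟨hoddr, _⟩
      exact hoddr.pos
  rw [hinf]
end

section
/- Under misère play, the losing paths for conjunctive compound Node-Kayles are exactly P_1 and P_2; i.e., P_n is a P-position if and only if n ∈ {1, 2}. -/
lemma not_conjMove_zero {H : Multiset ℕ} : ¬ ConjMove 0 H := by
  suffices h : ∀ {G H : Multiset ℕ}, ConjMove G H → G ≠ 0 by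
    intro hc; exact h hc rfl
  intro G H h
  induction h with
  | single hm => simp
  | cons hm hG ih => simp

lemma conjMove_single_inv {n : ℕ} {H : Multiset ℕ} (h : ConjMove {n} H) :
    H ∈ pathOptions n := by
  suffices aux : ∀ {G H : Multiset ℕ}, ConjMove G H → ∀ m : ℕ, G = {m} → H ∈ pathOptions m by
    exact aux h n rfl
  intro G H h
  induction h with
  | single hm =>
    intro m hm'
    rw [Multiset.singleton_inj] at hm'
    subst hm'; exact hm
  | @cons n' h' G' H' hm hG ih =>
    intro m hm'
    exfalso
    have hc : Multiset.card (n' ::ₘ G') = 1 := by rw [hm']; simp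
    simp at hc
    exact not_conjMove_zero (hc ▸ hG)

lemma pathOptions_one : pathOptions 1 = {({0} : Multiset ℕ)} := by
  simp [pathOptions]

lemma pathOptions_two : pathOptions 2 = {({0} : Multiset ℕ)} := by
  norm_num [pathOptions]

lemma pathOptions_nonempty {m : ℕ} (hm : m ≠ 0) : ∃ h, h ∈ pathOptions m := by
  rcases le_or_gt m 2 with h | h
  · exact ⟨{0}, by simp [pathOptions, hm, h]⟩
  · exact ⟨{m-2}, by simp [pathOptions, hm, show ¬ m ≤ 2 by omega]⟩

lemma zero_mem_of_one_mem {G H : Multiset ℕ} (h : ConjMove G H) (h1 : 1 ∈ G) : 0 ∈ H := by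
  induction h with
  | single hm =>
    rcases Multiset.mem_singleton.1 h1 with rfl
    rw [pathOptions_one] at hm
    simp [Set.mem_singleton_iff.1 hm]
  | cons hm hG ih =>
    rcases Multiset.mem_cons.1 h1 with rfl | h1'
    · rw [pathOptions_one] at hm
      rw [Set.mem_singleton_iff.1 hm]
      simp
    · exact Multiset.mem_add.2 (Or.inr (ih h1'))

lemma R_eq_one (R : Multiset ℕ → ℕ)
    (heven : ∀ G, ¬ Ended G → ¬ (∃ H, ConjMove G H ∧ Odd (R H)) →
      R G = 1 + sSup {r | Even r ∧ ∃ H, ConjMove G H ∧ R H = r})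
    {G : Multiset ℕ} (hG : ¬ Ended G)
    (hex : ∃ H, ConjMove G H) (hall : ∀ H, ConjMove G H → R H = 0) :
    R G = 1 := by
  have hno : ¬ (∃ H, ConjMove G H ∧ Odd (R H)) := by
    rintro ⟨H, hm, ho⟩
    rw [hall H hm] at ho
    simp at ho
  rw [heven G hG hno]
  have hset : {r | Even r ∧ ∃ H, ConjMove G H ∧ R H = r} = {0} := by
    ext r
    simp only [Set.mem_setOf_eq, Set.mem_singleton_iff]
    constructor
    · rintro ⟨-, H, hm, rfl⟩
      exact hall H hm
    · rintro rfl
      obtain ⟨H, hm⟩ := hex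
      exact ⟨Even.zero, H, hm, hall H hm⟩
  rw [hset, csSup_singleton]

section
variable (R : Multiset ℕ → ℕ)
    (hend : ∀ G, Ended G → R G = 0)
    (hodd : ∀ G, ¬ Ended G → (∃ H, ConjMove G H ∧ Odd (R H)) →
      R G = 1 + sInf {r | Odd r ∧ ∃ H, ConjMove G H ∧ R H = r})
    (heven : ∀ G, ¬ Ended G → ¬ (∃ H, ConjMove G H ∧ Odd (R H)) →
      R G = 1 + sSup {r | Even r ∧ ∃ H, ConjMove G H ∧ R H = r})

include hend heven in
lemma R_small {n : ℕ} (hn : n = 1 ∨ n = 2) : R {n} = 1 := by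
  have hpo : pathOptions n = {({0} : Multiset ℕ)} := by
    rcases hn with rfl | rfl
    · exact pathOptions_one
    · exact pathOptions_two
  apply R_eq_one R heven
  · intro hE
    rcases hE with h | h <;> simp at h <;> omega
  · exact ⟨{0}, ConjMove.single (by rw [hpo]; rfl)⟩
  · intro H hm
    have := conjMove_single_inv hm
    rw [hpo, Set.mem_singleton_iff] at this
    subst this
    exact hend _ (Or.inr (by simp))

include hend heven in
lemma R_pair {m : ℕ} (hm : m ≠ 0) : R {1, m} = 1 := by
  apply R_eq_one R heven
  · intro hE
    rcases hE with h | h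
    · simp [Multiset.insert_eq_cons] at h
    · simp at h
      omega
  · obtain ⟨h, hh⟩ := pathOptions_nonempty hm
    exact ⟨{0} + h, ConjMove.cons (by rw [pathOptions_one]; rfl) (ConjMove.single hh)⟩
  · intro H hmv
    exact hend _ (Or.inr (zero_mem_of_one_mem hmv (by simp)))

include hend hodd heven in
lemma R_big {n : ℕ} (hn : 3 ≤ n) : R {n} = 2 := by
  have hG : ¬ Ended ({n} : Multiset ℕ) := by
    intro hE
    rcases hE with h | h <;> simp at h <;> omega
  have hopt : ∃ H, ConjMove {n} H ∧ R H = 1 := by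
    rcases le_or_gt n 4 with h4 | h4
    · refine ⟨{n - 2}, ConjMove.single ?_, R_small R hend heven (by omega)⟩
      simp [pathOptions, show n ≠ 0 by omega, show ¬ n ≤ 2 by omega]
    · refine ⟨{1, n - 4}, ConjMove.single ?_, R_pair R hend heven (by omega)⟩
      simp only [pathOptions, if_neg (show n ≠ 0 by omega), if_neg (show ¬ n ≤ 2 by omega)]
      right
      exact ⟨1, n - 4, le_refl 1, by omega, by omega, rfl⟩
  obtain ⟨H₁, hm₁, hr₁⟩ := hopt
  have hexodd : ∃ H, ConjMove {n} H ∧ Odd (R H) := ⟨H₁, hm₁, by rw [hr₁]; exact odd_one⟩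
  rw [hodd _ hG hexodd]
  set S := {r | Odd r ∧ ∃ H, ConjMove {n} H ∧ R H = r} with hS
  have h1 : 1 ∈ S := ⟨odd_one, H₁, hm₁, hr₁⟩
  have hle : sInf S ≤ 1 := Nat.sInf_le h1
  have hmem : sInf S ∈ S := Nat.sInf_mem ⟨1, h1⟩
  obtain ⟨k, hk⟩ := hmem.1
  omega
end

theorem conjunctive_losing_paths_misere (R : Multiset ℕ → ℕ)
    (hend : ∀ G, Ended G → R G = 0)
    (hodd : ∀ G, ¬ Ended G → (∃ H, ConjMove G H ∧ Odd (R H)) →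
      R G = 1 + sInf {r | Odd r ∧ ∃ H, ConjMove G H ∧ R H = r})
    (heven : ∀ G, ¬ Ended G → ¬ (∃ H, ConjMove G H ∧ Odd (R H)) →
      R G = 1 + sSup {r | Even r ∧ ∃ H, ConjMove G H ∧ R H = r}) :
    ∀ n : ℕ, Odd (R {n}) ↔ n = 1 ∨ n = 2 := by
  intro n
  match n, Nat.lt_or_ge n 3 with
  | 0, _ =>
    rw [hend {0} (Or.inr (by simp))]
    simp
  | 1, _ =>
    rw [R_small R hend heven (Or.inl rfl)]
    simp [odd_one]
  | 2, _ =>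
    rw [R_small R hend heven (Or.inr rfl)]
    simp [odd_one]
  | (k+3), _ =>
    rw [R_big R hend hodd heven (by omega)]
    constructor
    · intro h; exact absurd h (by decide)
    · rintro (h | h) <;> omega
end

section
/- Let S⁺ be the normal suspense number for continued conjunctive compound Node-Kayles on paths: S⁺(empty)=0; S⁺(G) = 1 + max{even suspense numbers of options of G} if some option has even suspense number, otherwise S⁺(G) = 1 + min{odd suspense numbers of options of G}; and S⁺(P_i ∪ P_j) = max(S⁺(P_i), S⁺(P_j)). Then S⁺ is increasing on paths and for every n ≥ 0: S⁺(P_{5(2^n−1)}) = 2n, S⁺(P_k) = 2n+1 for all k with 5(2^n−1)+1 ≤ k ≤ 5(2^{n+1}−1)−2, and S⁺(P_{5(2^{n+1}−1)−1}) = 2n+2. -/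
/-- The values, under a valuation `f` of paths (with `f 0` the value of the empty
position), of the options of the path `P n` in Node-Kayles, where the value of a
disjoint union `P i ∪ P j` is `max (f i) (f j)`.  For `n = 1, 2` the only option
is the empty position; for `n ≥ 3` the options are `P (n-2)`, `P (n-3)` and the
unions `P i ∪ P j` with `j ≥ i ≥ 1`, `i + j = n - 3`. -/
def optValues (f : ℕ → ℕ) (n : ℕ) : Set ℕ :=
  if n ≤ 2 then {f 0}
  else {f (n - 2), f (n - 3)} ∪
    {v | ∃ i j : ℕ, 1 ≤ i ∧ i ≤ j ∧ i + j = n - 3 ∧ v = max (f i) (f j)}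


private def pa (n : ℕ) : ℕ := 5 * 2 ^ n - 5

private lemma pa_add (n : ℕ) : pa n + 5 = 5 * 2 ^ n := by
  have h : 1 ≤ 2 ^ n := Nat.one_le_two_pow
  simp only [pa]; omega

private lemma pa_succ (n : ℕ) : pa (n + 1) = 2 * pa n + 5 := by
  have h1 := pa_add n
  have h2 := pa_add (n + 1)
  rw [pow_succ] at h2
  omega

private lemma pa_zero : pa 0 = 0 := by simp [pa]

private lemma pa_mono : StrictMono pa := by
  apply strictMono_nat_of_lt_succ
  intro n; rw [pa_succ]; omega

private def Lg (k : ℕ) : ℕ := Nat.log 2 ((k + 5) / 5)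

private lemma Lg_spec (k : ℕ) : pa (Lg k) ≤ k ∧ k < pa (Lg k + 1) := by
  have hm : 1 ≤ (k + 5) / 5 := (Nat.one_le_div_iff (by norm_num)).mpr (by omega)
  have h1 : 2 ^ Lg k ≤ (k + 5) / 5 := Nat.pow_log_le_self 2 (by omega)
  have h2 : (k + 5) / 5 < 2 ^ (Lg k + 1) := Nat.lt_pow_succ_log_self (by norm_num) _
  have hA := pa_add (Lg k)
  have hB := pa_add (Lg k + 1)
  constructor
  · have : 5 * 2 ^ Lg k ≤ 5 * ((k + 5) / 5) := Nat.mul_le_mul_left _ h1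
    omega
  · have : 5 * ((k + 5) / 5 + 1) ≤ 5 * 2 ^ (Lg k + 1) := Nat.mul_le_mul_left _ h2
    omega

private lemma Lg_eq (n k : ℕ) (h1 : pa n ≤ k) (h2 : k < pa (n + 1)) : Lg k = n := by
  rcases Lg_spec k with ⟨a, b⟩
  by_contra hne
  rcases Nat.lt_or_ge (Lg k) n with h | h
  · have := pa_mono.monotone (show Lg k + 1 ≤ n from h)
    omega
  · have hlt : n < Lg k := lt_of_le_of_ne h (Ne.symm hne)
    have := pa_mono.monotone (show n + 1 ≤ Lg k from hlt)
    omega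

private def T (k : ℕ) : ℕ :=
  if k = pa (Lg k) then 2 * Lg k
  else if k + 1 = pa (Lg k + 1) then 2 * Lg k + 2
  else 2 * Lg k + 1

private lemma T_spec (n k : ℕ) (h1 : pa n ≤ k) (h2 : k < pa (n + 1)) :
    T k = if k = pa n then 2 * n else if k + 1 = pa (n + 1) then 2 * n + 2 else 2 * n + 1 := by
  rw [T, Lg_eq n k h1 h2]

private lemma T_pa (n : ℕ) : T (pa n) = 2 * n := by
  have hs := pa_succ n
  rw [T_spec n _ le_rfl (by omega), if_pos rfl]

private lemma T_odd (n k : ℕ) (h1 : pa n < k) (h2 : k + 2 ≤ pa (n + 1)) :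
    T k = 2 * n + 1 := by
  rw [T_spec n k (le_of_lt h1) (by omega), if_neg (by omega), if_neg (by omega)]

private lemma T_top (n k : ℕ) (h : k + 1 = pa (n + 1)) : T k = 2 * n + 2 := by
  have hs := pa_succ n
  rw [T_spec n k (by omega) (by omega), if_neg (by omega), if_pos h]

private lemma T_le_succ (k : ℕ) : T k ≤ T (k + 1) := by
  obtain ⟨h1, h2⟩ := Lg_spec k
  set n := Lg k with hn
  have hs := pa_succ n
  by_cases hb : k + 1 = pa (n + 1)
  · rw [T_top n k hb]
    have h3 : T (k + 1) = 2 * (n + 1) := by rw [hb, T_pa]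
    omega
  · have hk1 := T_spec n (k + 1) (by omega) (by omega)
    have hk0 := T_spec n k h1 h2
    rw [hk0, hk1]
    split_ifs <;> omega

private lemma T_mono : Monotone T := monotone_nat_of_le_succ T_le_succ

private lemma T_le (n k : ℕ) (h : k + 2 ≤ pa (n + 1)) : T k ≤ 2 * n + 1 := by
  by_cases hk : k ≤ pa n
  · have h3 := T_mono hk
    rw [T_pa] at h3
    omega
  · rw [T_odd n k (by omega) h]

private lemma opt_eq (S : ℕ → ℕ) (k : ℕ) (hk : 3 ≤ k)
    (hIH : ∀ j, j < k → S j = T j) :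
    optValues S k = T '' Set.Icc ((k - 2) / 2) (k - 2) := by
  rw [optValues, if_neg (by omega)]
  ext v
  simp only [Set.mem_union, Set.mem_insert_iff, Set.mem_singleton_iff, Set.mem_setOf_eq,
    Set.mem_image, Set.mem_Icc]
  constructor
  · rintro ((rfl | rfl) | ⟨i, j, hi, hij, hsum, rfl⟩)
    · exact ⟨k - 2, ⟨by omega, le_refl _⟩, (hIH _ (by omega)).symm⟩
    · exact ⟨k - 3, ⟨by omega, by omega⟩, (hIH _ (by omega)).symm⟩
    · refine ⟨j, ⟨by omega, by omega⟩, ?_⟩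
      rw [hIH i (by omega), hIH j (by omega), Nat.max_eq_right (T_mono hij)]
  · rintro ⟨j, ⟨hj1, hj2⟩, rfl⟩
    by_cases h1 : j = k - 2
    · left; left; rw [hIH _ (by omega), h1]
    · by_cases h2 : j = k - 3
      · left; right; rw [hIH _ (by omega), h2]
      · right
        refine ⟨k - 3 - j, j, by omega, by omega, by omega, ?_⟩
        rw [hIH _ (by omega), hIH j (by omega), Nat.max_eq_right (T_mono (by omega))]

theorem suspense_normal (S : ℕ → ℕ)
    (h0 : S 0 = 0)
    (heven : ∀ n, 1 ≤ n → (∃ v ∈ optValues S n, Even v) →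
      S n = 1 + sSup {v ∈ optValues S n | Even v})
    (hodd : ∀ n, 1 ≤ n → ¬ (∃ v ∈ optValues S n, Even v) →
      S n = 1 + sInf {v ∈ optValues S n | Odd v}) :
    Monotone S ∧ ∀ n : ℕ,
      S (5 * (2 ^ n - 1)) = 2 * n ∧
      (∀ k, 5 * (2 ^ n - 1) + 1 ≤ k → k ≤ 5 * (2 ^ (n + 1) - 1) - 2 → S k = 2 * n + 1) ∧
      S (5 * (2 ^ (n + 1) - 1) - 1) = 2 * n + 2 := by
  have key : ∀ k, S k = T k := by
    intro k
    induction k using Nat.strong_induction_on with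
    | _ k ih =>
    rcases Nat.lt_or_ge k 3 with hk | hk
    · have hT0 := T_pa 0
      rw [pa_zero] at hT0
      interval_cases k
      · rw [h0, hT0]
      · have hopt : optValues S 1 = {0} := by rw [optValues, if_pos (by norm_num), h0]
        have hE : {v ∈ optValues S 1 | Even v} = {0} := by
          rw [hopt]; ext v
          constructor
          · rintro ⟨hv, _⟩; exact hv
          · rintro rfl; exact ⟨rfl, Even.zero⟩
        have hT1 : T 1 = 2 * 0 + 1 := by
          have := pa_succ 0
          exact T_odd 0 1 (by rw [pa_zero]; omega) (by rw [pa_zero] at this; omega)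
        rw [heven 1 le_rfl ⟨0, by rw [hopt]; rfl, Even.zero⟩, hE, csSup_singleton, hT1]
      · have hopt : optValues S 2 = {0} := by rw [optValues, if_pos (by norm_num), h0]
        have hE : {v ∈ optValues S 2 | Even v} = {0} := by
          rw [hopt]; ext v
          constructor
          · rintro ⟨hv, _⟩; exact hv
          · rintro rfl; exact ⟨rfl, Even.zero⟩
        have hT2 : T 2 = 2 * 0 + 1 := by
          have := pa_succ 0
          exact T_odd 0 2 (by rw [pa_zero]; omega) (by rw [pa_zero] at this; omega)
        rw [heven 2 (by norm_num) ⟨0, by rw [hopt]; rfl, Even.zero⟩, hE, csSup_singleton, hT2]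
    · obtain ⟨n, h1, h2⟩ : ∃ n, pa n ≤ k ∧ k < pa (n + 1) := ⟨Lg k, Lg_spec k⟩
      have hs := pa_succ n
      have hopt := opt_eq S k hk (fun j hj => ih j hj)
      by_cases hA : k = pa n
      · -- k = pa n, so n ≥ 1; all option values equal 2(n-1)+1
        have hn1 : 1 ≤ n := by
          by_contra h
          have hh : n = 0 := by omega
          rw [hh, pa_zero] at hA; omega
        obtain ⟨p, rfl⟩ : ∃ p, n = p + 1 := ⟨n - 1, by omega⟩
        have hsp := pa_succ p
        have hval : ∀ j, (k - 2) / 2 ≤ j → j ≤ k - 2 → T j = 2 * p + 1 := by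
          intro j hj1 hj2
          exact T_odd p j (by omega) (by omega)
        have hnoeven : ¬ ∃ v ∈ optValues S k, Even v := by
          rintro ⟨v, hv, hev⟩
          rw [hopt] at hv
          obtain ⟨j, ⟨hj1, hj2⟩, rfl⟩ := hv
          rw [hval j hj1 hj2] at hev
          obtain ⟨t, ht⟩ := hev
          omega
        have hOdd : {v ∈ optValues S k | Odd v} = {2 * p + 1} := by
          ext v
          constructor
          · rintro ⟨hv, _⟩
            rw [hopt] at hv
            obtain ⟨j, ⟨hj1, hj2⟩, rfl⟩ := hv
            exact hval j hj1 hj2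
          · rintro rfl
            refine ⟨?_, ⟨p, by omega⟩⟩
            rw [hopt]
            exact ⟨k - 2, ⟨by omega, le_rfl⟩, hval _ (by omega) le_rfl⟩
        rw [hodd k (by omega) hnoeven, hOdd, csInf_singleton, hA, T_pa]
        omega
      · by_cases hB : k + 1 = pa (n + 1)
        · -- k = pa (n+1) - 1; all option values equal 2n+1
          have hval : ∀ j, (k - 2) / 2 ≤ j → j ≤ k - 2 → T j = 2 * n + 1 := by
            intro j hj1 hj2
            exact T_odd n j (by omega) (by omega)
          have hnoeven : ¬ ∃ v ∈ optValues S k, Even v := by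
            rintro ⟨v, hv, hev⟩
            rw [hopt] at hv
            obtain ⟨j, ⟨hj1, hj2⟩, rfl⟩ := hv
            rw [hval j hj1 hj2] at hev
            obtain ⟨t, ht⟩ := hev
            omega
          have hOdd : {v ∈ optValues S k | Odd v} = {2 * n + 1} := by
            ext v
            constructor
            · rintro ⟨hv, _⟩
              rw [hopt] at hv
              obtain ⟨j, ⟨hj1, hj2⟩, rfl⟩ := hv
              exact hval j hj1 hj2
            · rintro rfl
              refine ⟨?_, ⟨n, by omega⟩⟩
              rw [hopt]
              exact ⟨k - 2, ⟨by omega, le_rfl⟩, hval _ (by omega) le_rfl⟩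
          rw [hodd k (by omega) hnoeven, hOdd, csInf_singleton, T_top n k hB]
          omega
        · -- pa n < k and k + 2 ≤ pa (n+1): odd zone, max even option value is 2n
          have hC1 : pa n < k := lt_of_le_of_ne h1 (Ne.symm hA)
          have hC2 : k + 2 ≤ pa (n + 1) := by omega
          have hwit : (2 * n : ℕ) ∈ optValues S k := by
            rw [hopt]
            by_cases hc : pa n ≤ k - 2
            · exact ⟨pa n, ⟨by omega, hc⟩, T_pa n⟩
            · have hne0 : n ≠ 0 := by
                intro hh
                rw [hh, pa_zero] at hc
                omega
              obtain ⟨p, rfl⟩ : ∃ p, n = p + 1 := ⟨n - 1, by omega⟩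
              have hk2 : k - 2 + 1 = pa (p + 1) := by omega
              refine ⟨k - 2, ⟨by omega, le_rfl⟩, ?_⟩
              rw [T_top p (k - 2) hk2]
              omega
          have hub : ∀ v ∈ {v ∈ optValues S k | Even v}, v ≤ 2 * n := by
            rintro v ⟨hv, hev⟩
            rw [hopt] at hv
            obtain ⟨j, ⟨hj1, hj2⟩, rfl⟩ := hv
            have hle := T_le n j (by omega)
            obtain ⟨t, ht⟩ := hev
            omega
          have hmem : (2 * n : ℕ) ∈ {v ∈ optValues S k | Even v} := ⟨hwit, even_two_mul n⟩
          have hsup : sSup {v ∈ optValues S k | Even v} = 2 * n :=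
            le_antisymm (csSup_le ⟨_, hmem⟩ hub) (le_csSup ⟨2 * n, hub⟩ hmem)
          rw [heven k (by omega) ⟨2 * n, hwit, even_two_mul n⟩, hsup, T_odd n k hC1 hC2]
          omega
  have hpa : ∀ n, 5 * (2 ^ n - 1) = pa n := by
    intro n
    have h : 1 ≤ 2 ^ n := Nat.one_le_two_pow
    show 5 * (2 ^ n - 1) = 5 * 2 ^ n - 5
    omega
  refine ⟨fun a b hab => by rw [key a, key b]; exact T_mono hab, fun n => ?_⟩
  have hs := pa_succ n
  refine ⟨?_, ?_, ?_⟩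
  · rw [hpa, key, T_pa]
  · intro k hk1 hk2
    rw [hpa] at hk1
    rw [hpa] at hk2
    rw [key, T_odd n k (by omega) (by omega)]
  · rw [hpa, key]
    exact T_top n _ (by omega)
end

section
/- Define σ : ℕ → {0,1} by σ(0) = 0 and, for n ≥ 1, σ(n) = 1 − min over options G' of P_n of σ(G'), where σ(P_i ∪ P_j) = σ(i) ∨ σ(j) (boolean or). Then for every n ≥ 0: σ(5n) = σ(5n+4) = 0 and σ(5n+1) = σ(5n+2) = σ(5n+3) = 1. -/
theorem sigma_mod5 (σ : ℕ → ℕ) (hb : ∀ n, σ n ≤ 1) (h0 : σ 0 = 0)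
    (hrec : ∀ n, 1 ≤ n → σ n = 1 - sInf (optValues σ n)) :
    ∀ n : ℕ, σ n = if n % 5 = 0 ∨ n % 5 = 4 then 0 else 1 := by
  intro n
  induction n using Nat.strong_induction_on with
  | _ n ih =>
    match n, ih with
    | 0, _ => simpa using h0
    | 1, _ =>
      have hS : optValues σ 1 = {σ 0} := by simp [optValues]
      have := hrec 1 (by omega)
      rw [hS, csInf_singleton, h0] at this
      simpa using this
    | 2, _ =>
      have hS : optValues σ 2 = {σ 0} := by simp [optValues]
      have := hrec 2 (by omega)
      rw [hS, csInf_singleton, h0] at this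
      simpa using this
    | (m+3), ih =>
      have hS : optValues σ (m+3) = {σ (m+1), σ m} ∪
          {v | ∃ i j : ℕ, 1 ≤ i ∧ i ≤ j ∧ i + j = m ∧ v = max (σ i) (σ j)} := by
        have e2 : m + 3 - 2 = m + 1 := by omega
        have e3 : m + 3 - 3 = m := by omega
        simp only [optValues, if_neg (by omega : ¬ m + 3 ≤ 2), e2, e3]
      have hval := hrec (m+3) (by omega)
      rw [hS] at hval
      by_cases hc : m % 5 = 1 ∨ m % 5 = 2
      · -- n ≡ 4 or 0 mod 5 : all options equal 1
        have hall : ∀ v ∈ ({σ (m+1), σ m} ∪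
            {v | ∃ i j : ℕ, 1 ≤ i ∧ i ≤ j ∧ i + j = m ∧ v = max (σ i) (σ j)} : Set ℕ),
            v = 1 := by
          intro v hv
          simp only [Set.mem_union, Set.mem_insert_iff, Set.mem_singleton_iff,
            Set.mem_setOf_eq] at hv
          rcases hv with (h | h) | ⟨i, j, hi, hij, hsum, rfl⟩
          · rw [h, ih (m+1) (by omega)]
            split_ifs with h' <;> omega
          · rw [h, ih m (by omega)]
            split_ifs with h' <;> omega
          · rw [ih i (by omega), ih j (by omega)]
            split_ifs with h1 h2 h2 <;> simp <;> omega
        have hne : σ (m+1) ∈ ({σ (m+1), σ m} ∪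
            {v | ∃ i j : ℕ, 1 ≤ i ∧ i ≤ j ∧ i + j = m ∧ v = max (σ i) (σ j)} : Set ℕ) := by
          left; left; rfl
        have hmem := Nat.sInf_mem (⟨_, hne⟩ : Set.Nonempty _)
        have h1 : sInf ({σ (m+1), σ m} ∪
            {v | ∃ i j : ℕ, 1 ≤ i ∧ i ≤ j ∧ i + j = m ∧ v = max (σ i) (σ j)} : Set ℕ) = 1 :=
          hall _ hmem
        rw [h1] at hval
        rw [hval]
        split_ifs with h' <;> omega
      · -- n ≡ 1, 2 or 3 mod 5 : some option equals 0
        have h0mem : (0 : ℕ) ∈ ({σ (m+1), σ m} ∪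
            {v | ∃ i j : ℕ, 1 ≤ i ∧ i ≤ j ∧ i + j = m ∧ v = max (σ i) (σ j)} : Set ℕ) := by
          simp only [Set.mem_union, Set.mem_insert_iff, Set.mem_singleton_iff]
          by_cases hm : m % 5 = 0
          · have : σ m = 0 := by rw [ih m (by omega)]; simp [hm]
            exact Or.inl (Or.inr this.symm)
          · have : σ (m+1) = 0 := by
              rw [ih (m+1) (by omega)]
              have : (m+1) % 5 = 0 ∨ (m+1) % 5 = 4 := by omega
              simp [this]
            exact Or.inl (Or.inl this.symm)
        have h1 : sInf ({σ (m+1), σ m} ∪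
            {v | ∃ i j : ℕ, 1 ≤ i ∧ i ≤ j ∧ i + j = m ∧ v = max (σ i) (σ j)} : Set ℕ) = 0 :=
          Nat.sInf_eq_zero.mpr (Or.inl h0mem)
        rw [h1] at hval
        rw [hval]
        split_ifs with h' <;> omega

theorem selective_normal (σ : ℕ → ℕ) (hb : ∀ n, σ n ≤ 1) (h0 : σ 0 = 0)
    (hrec : ∀ n, 1 ≤ n → σ n = 1 - sInf (optValues σ n)) :
    ∀ n : ℕ, σ (5 * n) = 0 ∧ σ (5 * n + 4) = 0 ∧
      σ (5 * n + 1) = 1 ∧ σ (5 * n + 2) = 1 ∧ σ (5 * n + 3) = 1 := by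
  intro n
  have key := sigma_mod5 σ hb h0 hrec
  refine ⟨?_, ?_, ?_, ?_, ?_⟩ <;>
    [rw [key (5*n)]; rw [key (5*n+4)]; rw [key (5*n+1)]; rw [key (5*n+2)]; rw [key (5*n+3)]] <;>
    split_ifs with h <;> omega
end

section
/- Under normal play of selective compound Node-Kayles, the set of losing path lengths is exactly {5n : n ≥ 0} ∪ {5n + 4 : n ≥ 0}, i.e., P_n is a P-position iff n ≡ 0 or 4 (mod 5). -/
theorem selective_normal_losing (σ : ℕ → ℕ) (hb : ∀ n, σ n ≤ 1) (h0 : σ 0 = 0)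
    (hrec : ∀ n, 1 ≤ n → σ n = 1 - sInf (optValues σ n)) :
    ∀ n : ℕ, σ n = 0 ↔ n % 5 = 0 ∨ n % 5 = 4 := by
  have key : ∀ n : ℕ, σ n = if n % 5 = 0 ∨ n % 5 = 4 then 0 else 1 := by
    intro n
    induction n using Nat.strong_induction_on with
    | _ n ih =>
    by_cases h2 : n ≤ 2
    · interval_cases n
      · simp [h0]
      · rw [hrec 1 (by norm_num)]
        simp [optValues, h0]
      · rw [hrec 2 (by norm_num)]
        simp [optValues, h0]
    · push_neg at h2
      set S : Set ℕ := {σ (n-2), σ (n-3)} ∪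
          {v | ∃ i j : ℕ, 1 ≤ i ∧ i ≤ j ∧ i + j = n - 3 ∧ v = max (σ i) (σ j)} with hSdef
      have hS : optValues σ n = S := by
        rw [optValues, if_neg (by omega)]
      rw [hrec n (by omega), hS]
      by_cases hn : n % 5 = 0 ∨ n % 5 = 4
      · -- losing position: every option has value 1
        have h0notin : (0:ℕ) ∉ S := by
          intro hmem
          rcases hmem with (h | h) | ⟨i, j, hi, hij, hsum, hmax⟩
          · have h2' := ih (n-2) (by omega)
            rw [← h] at h2'
            have : (n-2) % 5 = 0 ∨ (n-2) % 5 = 4 := by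
              by_contra hc
              rw [if_neg hc] at h2'; omega
            omega
          · have h3' := ih (n-3) (by omega)
            have h' : (0:ℕ) = σ (n-3) := h
            rw [← h'] at h3'
            have : (n-3) % 5 = 0 ∨ (n-3) % 5 = 4 := by
              by_contra hc
              rw [if_neg hc] at h3'; omega
            omega
          · have hsi : σ i = 0 ∧ σ j = 0 := by
              constructor <;> omega
            have hi' := ih i (by omega)
            have hj' := ih j (by omega)
            rw [hsi.1] at hi'
            rw [hsi.2] at hj'
            have hri : i % 5 = 0 ∨ i % 5 = 4 := by
              by_contra hc; rw [if_neg hc] at hi'; omega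
            have hrj : j % 5 = 0 ∨ j % 5 = 4 := by
              by_contra hc; rw [if_neg hc] at hj'; omega
            omega
        have h1in : (1:ℕ) ∈ S := by
          have h2' := ih (n-2) (by omega)
          have : ¬((n-2) % 5 = 0 ∨ (n-2) % 5 = 4) := by omega
          rw [if_neg this] at h2'
          exact Or.inl (Or.inl h2'.symm)
        have hinf : sInf S = 1 := by
          have hne : sInf S ≠ 0 := by
            intro hz
            rcases Nat.sInf_eq_zero.mp hz with hz | hz
            · exact h0notin hz
            · rw [hz] at h1in; exact h1in
          have hle : sInf S ≤ 1 := Nat.sInf_le h1in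
          omega
        rw [hinf, if_pos hn]
      · -- winning position: some option has value 0
        have hres : (n-2) % 5 = 0 ∨ (n-2) % 5 = 4 ∨ (n-3) % 5 = 0 ∨ (n-3) % 5 = 4 := by
          omega
        have h0in : (0:ℕ) ∈ S := by
          rcases hres with h | h | h | h
          · have h2' := ih (n-2) (by omega)
            rw [if_pos (Or.inl h)] at h2'
            exact Or.inl (Or.inl h2'.symm)
          · have h2' := ih (n-2) (by omega)
            rw [if_pos (Or.inr h)] at h2'
            exact Or.inl (Or.inl h2'.symm)
          · have h3' := ih (n-3) (by omega)
            rw [if_pos (Or.inl h)] at h3'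
            exact Or.inl (Or.inr h3'.symm)
          · have h3' := ih (n-3) (by omega)
            rw [if_pos (Or.inr h)] at h3'
            exact Or.inl (Or.inr h3'.symm)
        rw [Nat.sInf_eq_zero.mpr (Or.inl h0in), if_neg hn]
  intro n
  rw [key n]
  split_ifs with h <;> simp [h]
end

section
/- Under misère play of selective compound Node-Kayles on a single path, P_n is a P-position if and only if n ≡ 1 or 2 (mod 7). -/
theorem selective_misere_losing (σ : ℕ → ℕ) (hb : ∀ n, σ n ≤ 1) (h0 : σ 0 = 1)
    (hrec : ∀ n, 1 ≤ n → σ n = 1 - sInf (optValues σ n)) :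
    ∀ n : ℕ, σ n = 0 ↔ n % 7 = 1 ∨ n % 7 = 2 := by
  intro n
  induction n using Nat.strong_induction_on with
  | _ n ih =>
  rcases Nat.lt_or_ge n 3 with h3 | h3
  · interval_cases n
    · simp [h0]
    · have h := hrec 1 (by norm_num)
      have hS : optValues σ 1 = {σ 0} := by unfold optValues; rw [if_pos (by norm_num)]
      rw [hS, csInf_singleton, h0] at h
      simp [h]
    · have h := hrec 2 (by norm_num)
      have hS : optValues σ 2 = {σ 0} := by unfold optValues; rw [if_pos (by norm_num)]
      rw [hS, csInf_singleton, h0] at h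
      simp [h]
  · have hS : optValues σ n = {σ (n-2), σ (n-3)} ∪
        {v | ∃ i j : ℕ, 1 ≤ i ∧ i ≤ j ∧ i + j = n - 3 ∧ v = max (σ i) (σ j)} := by
      unfold optValues; rw [if_neg (by omega)]
    have hmem : 0 ∈ optValues σ n ↔ (σ (n-2) = 0 ∨ σ (n-3) = 0 ∨
        ∃ i j : ℕ, 1 ≤ i ∧ i ≤ j ∧ i + j = n - 3 ∧ σ i = 0 ∧ σ j = 0) := by
      rw [hS]
      simp only [Set.mem_union, Set.mem_insert_iff, Set.mem_singleton_iff, Set.mem_setOf_eq]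
      constructor
      · rintro ((h|h) | ⟨i, j, h1, h2, h3', h4⟩)
        · exact Or.inl h.symm
        · exact Or.inr (Or.inl h.symm)
        · refine Or.inr (Or.inr ⟨i, j, h1, h2, h3', ?_, ?_⟩) <;> omega
      · rintro (h | h | ⟨i, j, h1, h2, h3', h4, h5⟩)
        · exact Or.inl (Or.inl h.symm)
        · exact Or.inl (Or.inr h.symm)
        · exact Or.inr ⟨i, j, h1, h2, h3', by simp [h4, h5]⟩
    have hrn := hrec n (by omega)
    have hmem2 : σ (n-2) ∈ optValues σ n := by
      rw [hS]; exact Or.inl (Or.inl rfl)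
    by_cases hP : n % 7 = 1 ∨ n % 7 = 2
    · have h0notmem : 0 ∉ optValues σ n := by
        rw [hmem]
        rintro (h | h | ⟨i, j, h1, h2, h3', h4, h5⟩)
        · have := (ih (n-2) (by omega)).mp h; omega
        · have := (ih (n-3) (by omega)).mp h; omega
        · have hi := (ih i (by omega)).mp h4
          have hj := (ih j (by omega)).mp h5
          omega
      have hne : (optValues σ n).Nonempty := ⟨σ (n-2), hmem2⟩
      have hinf : sInf (optValues σ n) = 1 := by
        have h1 : sInf (optValues σ n) ≠ 0 := by
          intro hz
          rw [Nat.sInf_eq_zero] at hz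
          rcases hz with h | h
          · exact h0notmem h
          · exact hne.ne_empty h
        have h2 : sInf (optValues σ n) ≤ σ (n-2) := Nat.sInf_le hmem2
        have := hb (n-2)
        omega
      rw [hinf] at hrn
      norm_num at hrn
      simp only [hrn]
      simpa using hP
    · have h0mem : 0 ∈ optValues σ n := by
        rw [hmem]
        have h7 : n % 7 = 0 ∨ n % 7 = 3 ∨ n % 7 = 4 ∨ n % 7 = 5 ∨ n % 7 = 6 := by omega
        rcases h7 with h|h|h|h|h
        · refine Or.inr (Or.inr ⟨2, n-5, by omega, by omega, by omega, ?_, ?_⟩)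
          · exact (ih 2 (by omega)).mpr (by omega)
          · exact (ih (n-5) (by omega)).mpr (by omega)
        · exact Or.inl ((ih (n-2) (by omega)).mpr (by omega))
        · exact Or.inl ((ih (n-2) (by omega)).mpr (by omega))
        · exact Or.inr (Or.inl ((ih (n-3) (by omega)).mpr (by omega)))
        · refine Or.inr (Or.inr ⟨1, n-4, le_refl 1, by omega, by omega, ?_, ?_⟩)
          · exact (ih 1 (by omega)).mpr (by omega)
          · exact (ih (n-4) (by omega)).mpr (by omega)
      have hinf : sInf (optValues σ n) = 0 := Nat.sInf_eq_zero.mpr (Or.inl h0mem)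
      rw [hinf] at hrn
      norm_num at hrn
      simp only [hrn]
      simpa using hP
end

section
/- Suppose ρ : ℕ → ℕ is the Sprague–Grundy function of an octal game on heaps satisfying: for some p > 0 and q > 0, ρ(n+p) = ρ(n) for every n with q ≤ n ≤ 2q + p + 2, where ρ(n) = mex({ρ(n-2), ρ(n-3)} ∪ {ρ(i) ⊕ ρ(j) : j ≥ i ≥ 1, i+j = n-3}) for n ≥ 4. Then ρ(n+p) = ρ(n) for every n ≥ q. -/
/-- The Grundy values of the options of the path `P n` in Node-Kayles under the
valuation `ρ`: the values of `P (n-2)` and `P (n-3)`, together with the Nim-sums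
`ρ i ^^^ ρ j` for the unions `P i ∪ P j` with `j ≥ i ≥ 1` and `i + j = n - 3`. -/
def grundyOptValues (ρ : ℕ → ℕ) (n : ℕ) : Set ℕ :=
  {ρ (n - 2), ρ (n - 3)} ∪
    {v | ∃ i j : ℕ, 1 ≤ i ∧ i ≤ j ∧ i + j = n - 3 ∧ v = ρ i ^^^ ρ j}

theorem guy_smith_periodicity (ρ : ℕ → ℕ)
    (hrec : ∀ n, 4 ≤ n → ρ n = mex (grundyOptValues ρ n))
    (p q : ℕ) (hp : 0 < p) (hq : 0 < q)
    (hper : ∀ n, q ≤ n → n ≤ 2 * q + p + 2 → ρ (n + p) = ρ n) :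
    ∀ n, q ≤ n → ρ (n + p) = ρ n := by
  intro n
  induction n using Nat.strong_induction_on with
  | _ n IH =>
    intro hqn
    by_cases hcase : n ≤ 2 * q + p + 2
    · exact hper n hqn hcase
    · push_neg at hcase
      have hn4 : 4 ≤ n := by omega
      have hnp4 : 4 ≤ n + p := by omega
      have h2 : ρ (n + p - 2) = ρ (n - 2) := by
        have e : n + p - 2 = (n - 2) + p := by omega
        rw [e]; exact IH (n - 2) (by omega) (by omega)
      have h3 : ρ (n + p - 3) = ρ (n - 3) := by
        have e : n + p - 3 = (n - 3) + p := by omega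
        rw [e]; exact IH (n - 3) (by omega) (by omega)
      have hset : grundyOptValues ρ (n + p) = grundyOptValues ρ n := by
        ext v
        simp only [grundyOptValues, Set.mem_union, Set.mem_insert_iff,
          Set.mem_singleton_iff, Set.mem_setOf_eq]
        constructor
        · rintro ((h | h) | ⟨i, j, hi, hij, hsum, rfl⟩)
          · left; left; rw [h, h2]
          · left; right; rw [h, h3]
          · -- i + j = n + p - 3, so j ≥ q + p
            have hjq : q + p ≤ j := by omega
            have hjρ : ρ j = ρ (j - p) := by
              have := IH (j - p) (by omega) (by omega)
              rw [show j - p + p = j by omega] at this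
              exact this
            right
            by_cases hle : i ≤ j - p
            · exact ⟨i, j - p, hi, hle, by omega, by rw [hjρ]⟩
            · exact ⟨j - p, i, by omega, by omega, by omega,
                by rw [hjρ, Nat.xor_comm]⟩
        · rintro ((h | h) | ⟨i, j, hi, hij, hsum, rfl⟩)
          · left; left; rw [h, ← h2]
          · left; right; rw [h, ← h3]
          · -- i + j = n - 3, j ≥ q
            have hjq : q ≤ j := by omega
            have hjρ : ρ (j + p) = ρ j := IH j (by omega) hjq
            right
            exact ⟨i, j + p, hi, by omega, by omega, by rw [hjρ]⟩
      rw [hrec n hn4, hrec (n + p) hnp4, mex, mex, hset]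
end
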